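/- Let all model parameters be positive, set φ_u = η_u+σ_u+μ, φ_n = η_n+σ_n+μ+δ_n, and define the complex function H(λ) = (1−p)·γ·β1/((λ+φ_u)·(λ+γ+μ)) + p·γ·ν·β1/((λ+φ_n)·(λ+γ+μ)) + (1−p)·γ·α_u·β2·(Π/μ)/((λ+μ_c)·(λ+φ_u)·(λ+γ+μ)) + p·γ·α_n·β2·(Π/μ)/((λ+μ_c)·(λ+φ_n)·(λ+γ+μ)). If the basic reproduction number ℛ₀ = H(0) satisfies ℛ₀ < 1, then every complex λ with Re(λ) ≥ 0 satisfies H(λ) ≠ 1; equivalently, every solution λ ∈ ℂ of H(λ) = 1 has Re(λ) < 0. -/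

import Mathlib

lemma shift_abs_ge (a : ℝ) (ha : 0 < a) (z : ℂ) (hz : 0 ≤ z.re) :
    a ≤ ‖z + a‖ := by
  have := Complex.re_le_norm (z + a)
  simp only [Complex.add_re, Complex.ofReal_re] at this
  linarith

lemma term_bound2 (c a b : ℝ) (hc : 0 ≤ c) (ha : 0 < a) (hb : 0 < b)
    (z : ℂ) (hz : 0 ≤ z.re) :
    ‖(c : ℂ) / ((z + a) * (z + b))‖ ≤ c / (a * b) := by
  rw [norm_div, norm_mul, Complex.norm_real, Real.norm_eq_abs, abs_of_nonneg hc]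
  have hA := shift_abs_ge a ha z hz
  have hB := shift_abs_ge b hb z hz
  have hab : 0 < a * b := mul_pos ha hb
  have h1 : a * b ≤ ‖z + a‖ * ‖z + b‖ :=
    mul_le_mul hA hB hb.le (le_trans ha.le hA)
  exact div_le_div_of_nonneg_left hc hab h1

lemma term_bound3 (c a b d : ℝ) (hc : 0 ≤ c) (ha : 0 < a) (hb : 0 < b) (hd : 0 < d)
    (z : ℂ) (hz : 0 ≤ z.re) :
    ‖(c : ℂ) / ((z + a) * (z + b) * (z + d))‖ ≤ c / (a * b * d) := by
  rw [norm_div, norm_mul, norm_mul, Complex.norm_real, Real.norm_eq_abs, abs_of_nonneg hc]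
  have hA := shift_abs_ge a ha z hz
  have hB := shift_abs_ge b hb z hz
  have hD := shift_abs_ge d hd z hz
  have hab : 0 < a * b := mul_pos ha hb
  have habd : 0 < a * b * d := mul_pos hab hd
  have h1 : a * b ≤ ‖z + a‖ * ‖z + b‖ :=
    mul_le_mul hA hB hb.le (le_trans ha.le hA)
  have h2 : a * b * d ≤ ‖z + a‖ * ‖z + b‖ * ‖z + d‖ :=
    mul_le_mul h1 hD hd.le (le_trans hab.le h1)
  exact div_le_div_of_nonneg_left hc habd h2

/-- if `ℛ₀ = H(0) < 1`, then no complex `λ` with `Re λ ≥ 0`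
solves the reduced characteristic equation `H(λ) = 1`; equivalently every
solution of `H(λ) = 1` has negative real part. -/
theorem covid_roots_negative_real_part
    (Pi b1 b2 nu th mu ga p eu en su sn sh dn dh au an mc : ℝ)
    (hPi : 0 < Pi) (hb1 : 0 < b1) (hb2 : 0 < b2) (hnu : 0 < nu) (hnu1 : nu < 1)
    (hth : 0 < th) (hmu : 0 < mu) (hga : 0 < ga) (hp : 0 < p) (hp1 : p < 1)
    (heu : 0 < eu) (hen : 0 < en) (hsu : 0 < su) (hsn : 0 < sn) (hsh : 0 < sh)
    (hdn : 0 < dn) (hdh : 0 < dh) (hau : 0 < au) (han : 0 < an) (hmc : 0 < mc)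
    (phiu phin : ℝ)
    (hphiu : phiu = eu + su + mu) (hphin : phin = en + sn + mu + dn)
    (H : ℂ → ℂ)
    (hH : ∀ lam : ℂ, H lam =
      ((((1 - p) * ga * b1 : ℝ) : ℂ) / ((lam + (phiu : ℂ)) * (lam + ((ga + mu : ℝ) : ℂ))))
      + (((p * ga * nu * b1 : ℝ) : ℂ) / ((lam + (phin : ℂ)) * (lam + ((ga + mu : ℝ) : ℂ))))
      + ((((1 - p) * ga * au * b2 * (Pi / mu) : ℝ) : ℂ) /
          ((lam + (mc : ℂ)) * (lam + (phiu : ℂ)) * (lam + ((ga + mu : ℝ) : ℂ))))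
      + (((p * ga * an * b2 * (Pi / mu) : ℝ) : ℂ) /
          ((lam + (mc : ℂ)) * (lam + (phin : ℂ)) * (lam + ((ga + mu : ℝ) : ℂ)))))
    (R0 : ℝ)
    (hR0 : (R0 : ℂ) = H 0)
    (hR0lt : R0 < 1) :
    (∀ lam : ℂ, 0 ≤ lam.re → H lam ≠ 1) ∧ (∀ lam : ℂ, H lam = 1 → lam.re < 0) := by
  have hphiu' : 0 < phiu := by rw [hphiu]; linarith
  have hphin' : 0 < phin := by rw [hphin]; linarith
  have hgm : 0 < ga + mu := by linarith
  have h1p : (0:ℝ) ≤ 1 - p := by linarith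
  have hc1 : 0 ≤ (1 - p) * ga * b1 := by
    exact mul_nonneg (mul_nonneg h1p hga.le) hb1.le
  have hc2 : 0 ≤ p * ga * nu * b1 := by positivity
  have hc3 : 0 ≤ (1 - p) * ga * au * b2 * (Pi / mu) := by
    have : (0:ℝ) ≤ Pi / mu := by positivity
    exact mul_nonneg (mul_nonneg (mul_nonneg (mul_nonneg h1p hga.le) hau.le) hb2.le) this
  have hc4 : 0 ≤ p * ga * an * b2 * (Pi / mu) := by positivity
  -- identify R0 as a real sum
  have hR0eq : R0 = (1 - p) * ga * b1 / (phiu * (ga + mu))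
      + p * ga * nu * b1 / (phin * (ga + mu))
      + (1 - p) * ga * au * b2 * (Pi / mu) / (mc * phiu * (ga + mu))
      + p * ga * an * b2 * (Pi / mu) / (mc * phin * (ga + mu)) := by
    have h0 : (R0 : ℂ) = (((1 - p) * ga * b1 / (phiu * (ga + mu))
        + p * ga * nu * b1 / (phin * (ga + mu))
        + (1 - p) * ga * au * b2 * (Pi / mu) / (mc * phiu * (ga + mu))
        + p * ga * an * b2 * (Pi / mu) / (mc * phin * (ga + mu)) : ℝ) : ℂ) := by
      rw [hR0, hH 0]
      push_cast
      ring
    exact_mod_cast h0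
  have key : ∀ lam : ℂ, 0 ≤ lam.re → H lam ≠ 1 := by
    intro lam hre heq
    have h1 := term_bound2 ((1 - p) * ga * b1) phiu (ga + mu) hc1 hphiu' hgm lam hre
    have h2 := term_bound2 (p * ga * nu * b1) phin (ga + mu) hc2 hphin' hgm lam hre
    have h3 := term_bound3 ((1 - p) * ga * au * b2 * (Pi / mu)) mc phiu (ga + mu)
      hc3 hmc hphiu' hgm lam hre
    have h4 := term_bound3 (p * ga * an * b2 * (Pi / mu)) mc phin (ga + mu)
      hc4 hmc hphin' hgm lam hre
    have habs : ‖H lam‖ ≤ R0 := by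
      rw [hH lam, hR0eq]
      refine le_trans ?_ (add_le_add (add_le_add (add_le_add h1 h2) h3) h4)
      exact le_trans (norm_add_le _ _)
        (add_le_add (le_trans (norm_add_le _ _)
          (add_le_add (norm_add_le _ _) le_rfl)) le_rfl)
    rw [heq] at habs
    simp at habs
    linarith
  refine ⟨key, fun lam h => ?_⟩
  by_contra hcon
  push_neg at hcon
  exact key lam hcon h
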